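/- Let X ⊂ ℤ² be X = {(i,j) : 1 ≤ i ≤ n, 1 ≤ j ≤ f(i)} where f : {1,…,n} → {1,…,m} is non-decreasing, with edges inherited from ℤ² (pairs at L¹-distance 1). Then the first non-zero eigenvalue of the discrete Neumann Laplacian on X satisfies μ_1 ≥ 1/((n + f(n) − 2)·max{n, f(n)}). -/

import Mathlib

open Finset

private lemma tel (g : ℕ → ℝ) (a b : ℕ) (h : a ≤ b) :
    ∑ t ∈ Finset.Ico a b, (g (t+1) - g t) = g b - g a := by
  induction b, h using Nat.le_induction with
  | base => simp
  | succ b hb ih => rw [Finset.sum_Ico_succ_top (by omega), ih]; ring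

private lemma cross (x y u v A B : ℝ) (hu : 0 ≤ u) (hv : 0 ≤ v) (hA : 0 ≤ A) (hB : 0 ≤ B)
    (h1 : x^2 ≤ u*A) (h2 : y^2 ≤ v*B) : 2*(x*y) ≤ u*B + v*A := by
  have h4 : (2*(x*y))^2 ≤ (u*B + v*A)^2 := by
    nlinarith [mul_le_mul h1 h2 (sq_nonneg y) (mul_nonneg hu hA), sq_nonneg (u*B - v*A)]
  have hc : 0 ≤ u*B + v*A := by positivity
  nlinarith [h4, hc]

private lemma cs3 (x y z u v w A B C : ℝ) (hu : 0 ≤ u) (hv : 0 ≤ v) (hw : 0 ≤ w)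
    (hA : 0 ≤ A) (hB : 0 ≤ B) (hC : 0 ≤ C)
    (h1 : x^2 ≤ u*A) (h2 : y^2 ≤ v*B) (h3 : z^2 ≤ w*C) :
    (x+y+z)^2 ≤ (u+v+w)*(A+B+C) := by
  have c12 := cross x y u v A B hu hv hA hB h1 h2
  have c13 := cross x z u w A C hu hw hA hC h1 h3
  have c23 := cross y z v w B C hv hw hB hC h2 h3
  nlinarith [c12, c13, c23]

private lemma interchange {α β : Type*} [DecidableEq β] (W : Finset α) (E : Finset β)
    (G : α → Finset β) (F : β → ℝ) (K : ℝ)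
    (hsub : ∀ a ∈ W, G a ⊆ E) (hF : ∀ e, 0 ≤ F e)
    (hcount : ∀ e ∈ E, ((W.filter (fun a => e ∈ G a)).card : ℝ) ≤ K) :
    ∑ a ∈ W, ∑ e ∈ G a, F e ≤ K * ∑ e ∈ E, F e := by
  have step1 : ∑ a ∈ W, ∑ e ∈ G a, F e = ∑ a ∈ W, ∑ e ∈ E, if e ∈ G a then F e else 0 := by
    refine Finset.sum_congr rfl fun a ha => ?_
    rw [Finset.sum_ite_mem, Finset.inter_eq_right.mpr (hsub a ha)]
  rw [step1, Finset.sum_comm, Finset.mul_sum]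
  refine Finset.sum_le_sum fun e he => ?_
  rw [← Finset.sum_filter, Finset.sum_const, nsmul_eq_mul]
  exact mul_le_mul_of_nonneg_right (hcount e he) (hF e)

private lemma pair_identity (X : Finset (ℕ×ℕ)) (ψ : ℕ×ℕ → ℝ) (hN : (X.card:ℝ) ≠ 0) :
    ∑ p ∈ X, ∑ q ∈ X, (ψ p - ψ q)^2
      = 2 * X.card * ∑ p ∈ X, (ψ p - (∑ q ∈ X, ψ q)/X.card)^2 := by
  have expand : ∀ c : ℝ, ∑ q ∈ X, (ψ q - c)^2
      = (∑ q ∈ X, ψ q^2) - 2*c*(∑ q ∈ X, ψ q) + X.card * c^2 := by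
    intro c
    calc ∑ q ∈ X, (ψ q - c)^2 = ∑ q ∈ X, (ψ q^2 - 2*c*ψ q + c^2) :=
          Finset.sum_congr rfl fun q _ => by ring
    _ = _ := by
        rw [Finset.sum_add_distrib, Finset.sum_sub_distrib, ← Finset.mul_sum, Finset.sum_const,
          nsmul_eq_mul]
  have lhs : ∑ p ∈ X, ∑ q ∈ X, (ψ p - ψ q)^2
      = 2*X.card*(∑ q ∈ X, ψ q^2) - 2*(∑ q ∈ X, ψ q)^2 := by
    calc ∑ p ∈ X, ∑ q ∈ X, (ψ p - ψ q)^2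
        = ∑ p ∈ X, ((∑ q ∈ X, ψ q^2) - 2*ψ p*(∑ q ∈ X, ψ q) + X.card * (ψ p)^2) := by
          refine Finset.sum_congr rfl fun p _ => ?_
          rw [← expand (ψ p)]
          exact Finset.sum_congr rfl fun q _ => by ring
    _ = ∑ p ∈ X, ((∑ q ∈ X, ψ q^2) + X.card * (ψ p)^2) - ∑ p ∈ X, ((2*(∑ q ∈ X, ψ q))*ψ p) := by
          rw [← Finset.sum_sub_distrib]
          exact Finset.sum_congr rfl fun p _ => by ring
    _ = _ := by
          rw [Finset.sum_add_distrib, Finset.sum_const, ← Finset.mul_sum, ← Finset.mul_sum,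
            nsmul_eq_mul]
          ring
  rw [lhs, expand]
  field_simp
  ring

section staircase
variable (n : ℕ) (f : ℕ → ℕ) (X : Finset (ℕ × ℕ))

private def Gv1 (p q : ℕ×ℕ) : Finset (ℕ×ℕ) := (Finset.Ico (min p.2 q.2) p.2).image (fun s => (p.1, s))
private def Gv2 (p q : ℕ×ℕ) : Finset (ℕ×ℕ) := (Finset.Ico (min p.2 q.2) q.2).image (fun s => (q.1, s))
private def Gh (p q : ℕ×ℕ) : Finset (ℕ×ℕ) :=
  (Finset.Ico (min p.1 q.1) (max p.1 q.1)).image (fun t => (t, min p.2 q.2))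
private def Dv2 (ψ : ℕ×ℕ → ℝ) (e : ℕ×ℕ) : ℝ := (ψ (e.1, e.2+1) - ψ (e.1, e.2))^2
private def Dh2 (ψ : ℕ×ℕ → ℝ) (e : ℕ×ℕ) : ℝ := (ψ (e.1+1, e.2) - ψ (e.1, e.2))^2

variable {n f X}

private lemma memX (hn : 1 ≤ n)
    (hmono : ∀ i j, 1 ≤ i → i ≤ j → j ≤ n → f i ≤ f j)
    (hX : X = (Finset.Icc 1 n ×ˢ Finset.Icc 1 (f n)).filter fun p => p.2 ≤ f p.1)
    {p : ℕ × ℕ} : p ∈ X ↔ 1 ≤ p.1 ∧ p.1 ≤ n ∧ 1 ≤ p.2 ∧ p.2 ≤ f p.1 := by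
  subst hX
  simp only [Finset.mem_filter, Finset.mem_product, Finset.mem_Icc]
  constructor
  · rintro ⟨⟨⟨h1,h2⟩,⟨h3,h4⟩⟩,h5⟩; exact ⟨h1,h2,h3,h5⟩
  · rintro ⟨h1,h2,h3,h5⟩
    exact ⟨⟨⟨h1,h2⟩,⟨h3, le_trans h5 (hmono p.1 n h1 h2 le_rfl)⟩⟩, h5⟩

private lemma rowcard (hn : 1 ≤ n)
    (hmono : ∀ i j, 1 ≤ i → i ≤ j → j ≤ n → f i ≤ f j)
    (hX : X = (Finset.Icc 1 n ×ˢ Finset.Icc 1 (f n)).filter fun p => p.2 ≤ f p.1)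
    (c : ℕ) : (X.filter fun p => p.1 = c).card ≤ f n := by
  have : (X.filter fun p => p.1 = c).card ≤ (Finset.Icc 1 (f n)).card := by
    apply Finset.card_le_card_of_injOn (fun p => p.2)
    · intro p hp
      rw [Finset.mem_coe, Finset.mem_filter] at hp
      obtain ⟨hpX, _⟩ := hp
      rw [memX hn hmono hX] at hpX
      rw [Finset.mem_coe, Finset.mem_Icc]
      exact ⟨hpX.2.2.1, le_trans hpX.2.2.2 (hmono p.1 n hpX.1 hpX.2.1 le_rfl)⟩
    · intro p hp q hq hpq
      rw [Finset.mem_coe, Finset.mem_filter] at hp hq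
      exact Prod.ext (hp.2.trans hq.2.symm) hpq
  simpa using this

private lemma colcard (hn : 1 ≤ n)
    (hmono : ∀ i j, 1 ≤ i → i ≤ j → j ≤ n → f i ≤ f j)
    (hX : X = (Finset.Icc 1 n ×ˢ Finset.Icc 1 (f n)).filter fun p => p.2 ≤ f p.1)
    (c : ℕ) : (X.filter fun p => p.2 = c).card ≤ n := by
  have : (X.filter fun p => p.2 = c).card ≤ (Finset.Icc 1 n).card := by
    apply Finset.card_le_card_of_injOn (fun p => p.1)
    · intro p hp
      rw [Finset.mem_coe, Finset.mem_filter] at hp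
      obtain ⟨hpX, _⟩ := hp
      rw [memX hn hmono hX] at hpX
      rw [Finset.mem_coe, Finset.mem_Icc]
      exact ⟨hpX.1, hpX.2.1⟩
    · intro p hp q hq hpq
      rw [Finset.mem_coe, Finset.mem_filter] at hp hq
      exact Prod.ext hpq (hp.2.trans hq.2.symm)
  simpa using this

private lemma perpair (hn : 1 ≤ n)
    (hmono : ∀ i j, 1 ≤ i → i ≤ j → j ≤ n → f i ≤ f j)
    (hX : X = (Finset.Icc 1 n ×ˢ Finset.Icc 1 (f n)).filter fun p => p.2 ≤ f p.1)
    (ψ : ℕ×ℕ → ℝ) {p q : ℕ×ℕ} (hp : p ∈ X) (hq : q ∈ X) :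
    (ψ p - ψ q)^2 ≤ ((n + f n - 2 : ℕ):ℝ) *
      ((∑ e ∈ Gv1 p q, Dv2 ψ e) + (∑ e ∈ Gv2 p q, Dv2 ψ e) + (∑ e ∈ Gh p q, Dh2 ψ e)) := by
  obtain ⟨i,j⟩ := p
  obtain ⟨k,l⟩ := q
  rw [memX hn hmono hX] at hp hq
  simp only at hp hq
  obtain ⟨hi1, hi2, hj1, hj2⟩ := hp
  obtain ⟨hk1, hk2, hl1, hl2⟩ := hq
  have hjn : j ≤ f n := le_trans hj2 (hmono i n hi1 hi2 le_rfl)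
  have hln : l ≤ f n := le_trans hl2 (hmono k n hk1 hk2 le_rfl)
  set h := min j l with hh
  -- sums over the three edge groups
  have hS1 : ∑ e ∈ Gv1 (i,j) (k,l), Dv2 ψ e = ∑ s ∈ Finset.Ico h j, (ψ (i, s+1) - ψ (i,s))^2 := by
    apply Finset.sum_image
    intro x _ y _ hxy
    simpa using congrArg Prod.snd hxy
  have hS2 : ∑ e ∈ Gv2 (i,j) (k,l), Dv2 ψ e = ∑ s ∈ Finset.Ico h l, (ψ (k, s+1) - ψ (k,s))^2 := by
    apply Finset.sum_image
    intro x _ y _ hxy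
    simpa using congrArg Prod.snd hxy
  have hS3 : ∑ e ∈ Gh (i,j) (k,l), Dh2 ψ e
      = ∑ t ∈ Finset.Ico (min i k) (max i k), (ψ (t+1, h) - ψ (t,h))^2 := by
    apply Finset.sum_image
    intro x _ y _ hxy
    simpa using congrArg Prod.fst hxy
  -- Cauchy–Schwarz blocks
  have hA : (ψ (i,j) - ψ (i,h))^2 ≤ ((j - h : ℕ):ℝ) * ∑ s ∈ Finset.Ico h j, (ψ (i,s+1) - ψ (i,s))^2 := by
    have := sq_sum_le_card_mul_sum_sq (s := Finset.Ico h j) (f := fun s => ψ (i,s+1) - ψ (i,s))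
    rwa [tel (fun s => ψ (i,s)) h j (min_le_left j l), Nat.card_Ico] at this
  have hB : (ψ (k,l) - ψ (k,h))^2 ≤ ((l - h : ℕ):ℝ) * ∑ s ∈ Finset.Ico h l, (ψ (k,s+1) - ψ (k,s))^2 := by
    have := sq_sum_le_card_mul_sum_sq (s := Finset.Ico h l) (f := fun s => ψ (k,s+1) - ψ (k,s))
    rwa [tel (fun s => ψ (k,s)) h l (min_le_right j l), Nat.card_Ico] at this
  have hC : (ψ (i,h) - ψ (k,h))^2 ≤ ((max i k - min i k : ℕ):ℝ) *
      ∑ t ∈ Finset.Ico (min i k) (max i k), (ψ (t+1,h) - ψ (t,h))^2 := by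
    have hcs := sq_sum_le_card_mul_sum_sq (s := Finset.Ico (min i k) (max i k))
      (f := fun t => ψ (t+1,h) - ψ (t,h))
    rw [tel (fun t => ψ (t,h)) _ _ (min_le_max), Nat.card_Ico] at hcs
    rcases le_total i k with hik | hik
    · rw [min_eq_left hik, max_eq_right hik] at hcs ⊢
      rw [show (ψ (i,h) - ψ (k,h))^2 = (ψ (k,h) - ψ (i,h))^2 by ring]
      exact hcs
    · rw [min_eq_right hik, max_eq_left hik] at hcs ⊢
      exact hcs
  have key := cs3 (ψ (i,j) - ψ (i,h)) (ψ (i,h) - ψ (k,h)) (ψ (k,h) - ψ (k,l))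
    ((j - h : ℕ):ℝ) ((max i k - min i k : ℕ):ℝ) ((l - h : ℕ):ℝ)
    (∑ s ∈ Finset.Ico h j, (ψ (i,s+1) - ψ (i,s))^2)
    (∑ t ∈ Finset.Ico (min i k) (max i k), (ψ (t+1,h) - ψ (t,h))^2)
    (∑ s ∈ Finset.Ico h l, (ψ (k,s+1) - ψ (k,s))^2)
    (Nat.cast_nonneg _) (Nat.cast_nonneg _) (Nat.cast_nonneg _)
    (Finset.sum_nonneg fun s _ => sq_nonneg _)
    (Finset.sum_nonneg fun s _ => sq_nonneg _)
    (Finset.sum_nonneg fun s _ => sq_nonneg _)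
    hA hC (by rw [show (ψ (k,h) - ψ (k,l))^2 = (ψ (k,l) - ψ (k,h))^2 by ring]; exact hB)
  rw [show ψ (i,j) - ψ (i,h) + (ψ (i,h) - ψ (k,h)) + (ψ (k,h) - ψ (k,l))
      = ψ (i,j) - ψ (k,l) by ring] at key
  have harith : ((j - h : ℕ):ℝ) + ((max i k - min i k : ℕ):ℝ) + ((l - h : ℕ):ℝ)
      ≤ ((n + f n - 2 : ℕ):ℝ) := by
    have hnat : j - h + (max i k - min i k) + (l - h) ≤ n + f n - 2 := by omega
    exact_mod_cast Nat.cast_le.mpr hnat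
  have hnn : (0:ℝ) ≤ (∑ s ∈ Finset.Ico h j, (ψ (i,s+1) - ψ (i,s))^2)
      + (∑ t ∈ Finset.Ico (min i k) (max i k), (ψ (t+1,h) - ψ (t,h))^2)
      + (∑ s ∈ Finset.Ico h l, (ψ (k,s+1) - ψ (k,s))^2) := by
    have n1 : (0:ℝ) ≤ ∑ s ∈ Finset.Ico h j, (ψ (i,s+1) - ψ (i,s))^2 :=
      Finset.sum_nonneg fun s _ => sq_nonneg _
    have n2 : (0:ℝ) ≤ ∑ t ∈ Finset.Ico (min i k) (max i k), (ψ (t+1,h) - ψ (t,h))^2 :=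
      Finset.sum_nonneg fun s _ => sq_nonneg _
    have n3 : (0:ℝ) ≤ ∑ s ∈ Finset.Ico h l, (ψ (k,s+1) - ψ (k,s))^2 :=
      Finset.sum_nonneg fun s _ => sq_nonneg _
    linarith
  have := le_trans key (mul_le_mul_of_nonneg_right harith hnn)
  rw [hS1, hS2, hS3]
  linarith [this]

private lemma core (hn : 1 ≤ n) (hf1 : ∀ i, 1 ≤ f i)
    (hmono : ∀ i j, 1 ≤ i → i ≤ j → j ≤ n → f i ≤ f j)
    (hX : X = (Finset.Icc 1 n ×ˢ Finset.Icc 1 (f n)).filter fun p => p.2 ≤ f p.1)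
    (ψ : ℕ×ℕ → ℝ) :
    ∑ p ∈ X, ∑ q ∈ X, (ψ p - ψ q)^2 ≤
      ((n + f n - 2 : ℕ):ℝ) * ((max n (f n) : ℕ):ℝ) * (X.card:ℝ) *
        ∑ p ∈ X, ∑ q ∈ X,
          (if (p.1 - q.1) + (q.1 - p.1) + (p.2 - q.2) + (q.2 - p.2) = 1
           then (ψ p - ψ q)^2 else 0) := by
  classical
  set L : ℝ := ((n + f n - 2 : ℕ):ℝ) with hL
  set M : ℝ := ((max n (f n) : ℕ):ℝ) with hM
  set N : ℝ := (X.card:ℝ) with hN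
  have hL0 : 0 ≤ L := Nat.cast_nonneg _
  have hM0 : 0 ≤ M := Nat.cast_nonneg _
  have hN0 : 0 ≤ N := Nat.cast_nonneg _
  set Ev : Finset (ℕ×ℕ) := X.filter (fun e => (e.1, e.2+1) ∈ X) with hEv
  set Eh : Finset (ℕ×ℕ) := X.filter (fun e => (e.1+1, e.2) ∈ X) with hEh
  set A : ℝ := ∑ e ∈ Ev, Dv2 ψ e with hA
  set B : ℝ := ∑ e ∈ Eh, Dh2 ψ e with hB
  have hA0 : 0 ≤ A := Finset.sum_nonneg fun e _ => sq_nonneg _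
  have hB0 : 0 ≤ B := Finset.sum_nonneg fun e _ => sq_nonneg _
  have hnM : (n:ℝ) ≤ M := by rw [hM]; exact_mod_cast le_max_left n (f n)
  have hfM : ((f n:ℕ):ℝ) ≤ M := by rw [hM]; exact_mod_cast le_max_right n (f n)
  -- counts
  have hrow := rowcard hn hmono hX
  have hcol := colcard hn hmono hX
  -- step 1: per-pair, summed over the product
  have step1 : ∑ a ∈ X ×ˢ X, (ψ a.1 - ψ a.2)^2 ≤
      L * ((∑ a ∈ X ×ˢ X, ∑ e ∈ Gv1 a.1 a.2, Dv2 ψ e)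
        + (∑ a ∈ X ×ˢ X, ∑ e ∈ Gv2 a.1 a.2, Dv2 ψ e)
        + (∑ a ∈ X ×ˢ X, ∑ e ∈ Gh a.1 a.2, Dh2 ψ e)) := by
    rw [← Finset.sum_add_distrib, ← Finset.sum_add_distrib, Finset.mul_sum]
    refine Finset.sum_le_sum fun a ha => ?_
    rw [Finset.mem_product] at ha
    exact perpair hn hmono hX ψ ha.1 ha.2
  -- step 2: interchange bounds
  have hT1 : ∑ a ∈ X ×ˢ X, ∑ e ∈ Gv1 a.1 a.2, Dv2 ψ e ≤ (M*N) * A := by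
    refine interchange (X ×ˢ X) Ev _ (Dv2 ψ) (M*N) ?_ (fun e => sq_nonneg _) ?_
    · rintro ⟨p, q⟩ ha e he
      rw [Finset.mem_product] at ha
      simp only [Gv1, Finset.mem_image, Finset.mem_Ico] at he
      obtain ⟨s, ⟨hs1, hs2⟩, rfl⟩ := he
      have hpm := (memX hn hmono hX).mp ha.1
      have hqm := (memX hn hmono hX).mp ha.2
      dsimp only at hpm hqm
      have h1 : 1 ≤ s := le_trans (le_min hpm.2.2.1 hqm.2.2.1) hs1
      rw [hEv, Finset.mem_filter]
      constructor
      · exact (memX hn hmono hX).mpr ⟨hpm.1, hpm.2.1, h1, show s ≤ f p.1 by omega⟩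
      · exact (memX hn hmono hX).mpr ⟨hpm.1, hpm.2.1, show 1 ≤ s + 1 by omega,
          show s + 1 ≤ f p.1 by omega⟩
    · intro e he
      have hsub2 : ((X ×ˢ X).filter (fun a => e ∈ Gv1 a.1 a.2))
          ⊆ (X.filter fun p => p.1 = e.1) ×ˢ X := by
        intro a ha
        rw [Finset.mem_filter] at ha
        obtain ⟨haW, hae⟩ := ha
        rw [Finset.mem_product] at haW
        simp only [Gv1, Finset.mem_image, Finset.mem_Ico] at hae
        obtain ⟨s, _, hse⟩ := hae
        rw [Finset.mem_product, Finset.mem_filter]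
        exact ⟨⟨haW.1, by rw [← hse]⟩, haW.2⟩
      calc (((X ×ˢ X).filter (fun a => e ∈ Gv1 a.1 a.2)).card : ℝ)
          ≤ (((X.filter fun p => p.1 = e.1) ×ˢ X).card : ℝ) := by
            exact_mod_cast Finset.card_le_card hsub2
        _ = ((X.filter fun p => p.1 = e.1).card : ℝ) * N := by
            rw [Finset.card_product]; push_cast; rfl
        _ ≤ ((f n : ℕ):ℝ) * N := by
            exact mul_le_mul_of_nonneg_right (by exact_mod_cast hrow e.1) hN0
        _ ≤ M * N := mul_le_mul_of_nonneg_right hfM hN0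
  have hT2 : ∑ a ∈ X ×ˢ X, ∑ e ∈ Gv2 a.1 a.2, Dv2 ψ e ≤ (M*N) * A := by
    refine interchange (X ×ˢ X) Ev _ (Dv2 ψ) (M*N) ?_ (fun e => sq_nonneg _) ?_
    · rintro ⟨p, q⟩ ha e he
      rw [Finset.mem_product] at ha
      simp only [Gv2, Finset.mem_image, Finset.mem_Ico] at he
      obtain ⟨s, ⟨hs1, hs2⟩, rfl⟩ := he
      have hpm := (memX hn hmono hX).mp ha.1
      have hqm := (memX hn hmono hX).mp ha.2
      dsimp only at hpm hqm
      have h1 : 1 ≤ s := le_trans (le_min hpm.2.2.1 hqm.2.2.1) hs1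
      rw [hEv, Finset.mem_filter]
      constructor
      · exact (memX hn hmono hX).mpr ⟨hqm.1, hqm.2.1, h1, show s ≤ f q.1 by omega⟩
      · exact (memX hn hmono hX).mpr ⟨hqm.1, hqm.2.1, show 1 ≤ s + 1 by omega,
          show s + 1 ≤ f q.1 by omega⟩
    · intro e he
      have hsub2 : ((X ×ˢ X).filter (fun a => e ∈ Gv2 a.1 a.2))
          ⊆ X ×ˢ (X.filter fun p => p.1 = e.1) := by
        intro a ha
        rw [Finset.mem_filter] at ha
        obtain ⟨haW, hae⟩ := ha
        rw [Finset.mem_product] at haW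
        simp only [Gv2, Finset.mem_image, Finset.mem_Ico] at hae
        obtain ⟨s, _, hse⟩ := hae
        rw [Finset.mem_product, Finset.mem_filter]
        exact ⟨haW.1, ⟨haW.2, by rw [← hse]⟩⟩
      calc (((X ×ˢ X).filter (fun a => e ∈ Gv2 a.1 a.2)).card : ℝ)
          ≤ ((X ×ˢ (X.filter fun p => p.1 = e.1)).card : ℝ) := by
            exact_mod_cast Finset.card_le_card hsub2
        _ = N * ((X.filter fun p => p.1 = e.1).card : ℝ) := by
            rw [Finset.card_product]; push_cast; rfl
        _ ≤ N * ((f n : ℕ):ℝ) := by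
            exact mul_le_mul_of_nonneg_left (by exact_mod_cast hrow e.1) hN0
        _ ≤ M * N := by
            rw [mul_comm]; exact mul_le_mul_of_nonneg_right hfM hN0
  have hT3 : ∑ a ∈ X ×ˢ X, ∑ e ∈ Gh a.1 a.2, Dh2 ψ e ≤ (M*N + M*N) * B := by
    refine interchange (X ×ˢ X) Eh _ (Dh2 ψ) (M*N + M*N) ?_ (fun e => sq_nonneg _) ?_
    · rintro ⟨p, q⟩ ha e he
      rw [Finset.mem_product] at ha
      simp only [Gh, Finset.mem_image, Finset.mem_Ico] at he
      obtain ⟨t, ⟨ht1, ht2⟩, rfl⟩ := he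
      have hpm := (memX hn hmono hX).mp ha.1
      have hqm := (memX hn hmono hX).mp ha.2
      dsimp only at hpm hqm
      have hminpos : 1 ≤ min p.1 q.1 := le_min hpm.1 hqm.1
      have hmaxle : max p.1 q.1 ≤ n := max_le hpm.2.1 hqm.2.1
      have hval : min p.2 q.2 ≤ f (min p.1 q.1) := by
        rcases min_choice p.1 q.1 with hc | hc <;> rw [hc]
        · exact le_trans (min_le_left _ _) hpm.2.2.2
        · exact le_trans (min_le_right _ _) hqm.2.2.2
      have hft : min p.2 q.2 ≤ f t :=
        le_trans hval (hmono _ t hminpos ht1 (by omega))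
      have hft1 : min p.2 q.2 ≤ f (t+1) :=
        le_trans hval (hmono _ (t+1) hminpos (by omega) (by omega))
      have hmin2 : 1 ≤ min p.2 q.2 := le_min hpm.2.2.1 hqm.2.2.1
      rw [hEh, Finset.mem_filter]
      constructor
      · exact (memX hn hmono hX).mpr ⟨show 1 ≤ t by omega, show t ≤ n by omega, hmin2, hft⟩
      · exact (memX hn hmono hX).mpr ⟨show 1 ≤ t + 1 by omega, show t + 1 ≤ n by omega,
          hmin2, hft1⟩
    · intro e he
      have hsub2 : ((X ×ˢ X).filter (fun a => e ∈ Gh a.1 a.2))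
          ⊆ ((X.filter fun p => p.2 = e.2) ×ˢ X) ∪ (X ×ˢ (X.filter fun p => p.2 = e.2)) := by
        intro a ha
        rw [Finset.mem_filter] at ha
        obtain ⟨haW, hae⟩ := ha
        rw [Finset.mem_product] at haW
        simp only [Gh, Finset.mem_image, Finset.mem_Ico] at hae
        obtain ⟨t, _, hse⟩ := hae
        have he2 : min a.1.2 a.2.2 = e.2 := by rw [← hse]
        rw [Finset.mem_union, Finset.mem_product, Finset.mem_product]
        rcases min_choice a.1.2 a.2.2 with hc | hc
        · left
          exact ⟨Finset.mem_filter.mpr ⟨haW.1, by rw [← he2, hc]⟩, haW.2⟩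
        · right
          exact ⟨haW.1, Finset.mem_filter.mpr ⟨haW.2, by rw [← he2, hc]⟩⟩
      calc (((X ×ˢ X).filter (fun a => e ∈ Gh a.1 a.2)).card : ℝ)
          ≤ ((((X.filter fun p => p.2 = e.2) ×ˢ X) ∪ (X ×ˢ (X.filter fun p => p.2 = e.2))).card : ℝ) := by
            exact_mod_cast Finset.card_le_card hsub2
        _ ≤ (((X.filter fun p => p.2 = e.2) ×ˢ X).card : ℝ)
            + ((X ×ˢ (X.filter fun p => p.2 = e.2)).card : ℝ) := by
            exact_mod_cast Finset.card_union_le _ _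
        _ ≤ (n:ℝ) * N + N * (n:ℝ) := by
            rw [Finset.card_product, Finset.card_product]
            push_cast
            have h1 : ((X.filter fun p => p.2 = e.2).card : ℝ) ≤ (n:ℝ) := by
              exact_mod_cast hcol e.2
            have h2 : (0:ℝ) ≤ ((X.filter fun p => p.2 = e.2).card : ℝ) := Nat.cast_nonneg _
            exact add_le_add (mul_le_mul_of_nonneg_right h1 hN0)
              (mul_le_mul_of_nonneg_left h1 hN0)
        _ ≤ M*N + M*N := by
            have h3 := mul_le_mul_of_nonneg_right hnM hN0
            have h4 := mul_le_mul_of_nonneg_left hnM hN0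
            nlinarith [h3, h4]
  set Q2 : ℝ := ∑ p ∈ X, ∑ q ∈ X,
      (if (p.1 - q.1) + (q.1 - p.1) + (p.2 - q.2) + (q.2 - p.2) = 1
       then (ψ p - ψ q)^2 else 0) with hQ2def
  have pw : ∀ p q : ℕ×ℕ,
      (if q = (p.1+1, p.2) then (ψ p - ψ q)^2 else 0)
      + (if q = (p.1, p.2+1) then (ψ p - ψ q)^2 else 0)
      + (if p = (q.1+1, q.2) then (ψ p - ψ q)^2 else 0)
      + (if p = (q.1, q.2+1) then (ψ p - ψ q)^2 else 0)
      ≤ (if (p.1 - q.1) + (q.1 - p.1) + (p.2 - q.2) + (q.2 - p.2) = 1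
         then (ψ p - ψ q)^2 else 0) := by
    intro p q
    obtain ⟨i, j⟩ := p
    obtain ⟨k, l⟩ := q
    have hw := sq_nonneg (ψ (i,j) - ψ (k,l))
    dsimp only
    simp only [Prod.mk.injEq]
    split_ifs <;> first | linarith | (exfalso; omega)
  have hfour : (∑ p ∈ X, ∑ q ∈ X, (if q = (p.1+1, p.2) then (ψ p - ψ q)^2 else 0))
      + (∑ p ∈ X, ∑ q ∈ X, (if q = (p.1, p.2+1) then (ψ p - ψ q)^2 else 0))
      + (∑ p ∈ X, ∑ q ∈ X, (if p = (q.1+1, q.2) then (ψ p - ψ q)^2 else 0))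
      + (∑ p ∈ X, ∑ q ∈ X, (if p = (q.1, q.2+1) then (ψ p - ψ q)^2 else 0)) ≤ Q2 := by
    rw [hQ2def]
    rw [← Finset.sum_add_distrib, ← Finset.sum_add_distrib, ← Finset.sum_add_distrib]
    refine Finset.sum_le_sum fun p _ => ?_
    rw [← Finset.sum_add_distrib, ← Finset.sum_add_distrib, ← Finset.sum_add_distrib]
    exact Finset.sum_le_sum fun q _ => pw p q
  have t1 : ∑ p ∈ X, ∑ q ∈ X, (if q = (p.1+1, p.2) then (ψ p - ψ q)^2 else 0) = B := by
    rw [hB, hEh, Finset.sum_filter]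
    refine Finset.sum_congr rfl fun p _ => ?_
    rw [Finset.sum_ite_eq' X (p.1+1, p.2) (fun q => (ψ p - ψ q)^2)]
    by_cases hmem : (p.1+1, p.2) ∈ X
    · simp only [hmem, if_true, Dh2]
      try ring_nf
    · simp [hmem]
  have t3 : ∑ p ∈ X, ∑ q ∈ X, (if p = (q.1+1, q.2) then (ψ p - ψ q)^2 else 0) = B := by
    rw [Finset.sum_comm, hB, hEh, Finset.sum_filter]
    refine Finset.sum_congr rfl fun q _ => ?_
    rw [Finset.sum_ite_eq' X (q.1+1, q.2) (fun p => (ψ p - ψ q)^2)]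
    by_cases hmem : (q.1+1, q.2) ∈ X
    · simp only [hmem, if_true, Dh2]
      try ring_nf
    · simp [hmem]
  have t2 : ∑ p ∈ X, ∑ q ∈ X, (if q = (p.1, p.2+1) then (ψ p - ψ q)^2 else 0) = A := by
    rw [hA, hEv, Finset.sum_filter]
    refine Finset.sum_congr rfl fun p _ => ?_
    rw [Finset.sum_ite_eq' X (p.1, p.2+1) (fun q => (ψ p - ψ q)^2)]
    by_cases hmem : (p.1, p.2+1) ∈ X
    · simp only [hmem, if_true, Dv2]
      try ring_nf
    · simp [hmem]
  have t4 : ∑ p ∈ X, ∑ q ∈ X, (if p = (q.1, q.2+1) then (ψ p - ψ q)^2 else 0) = A := by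
    rw [Finset.sum_comm, hA, hEv, Finset.sum_filter]
    refine Finset.sum_congr rfl fun q _ => ?_
    rw [Finset.sum_ite_eq' X (q.1, q.2+1) (fun p => (ψ p - ψ q)^2)]
    by_cases hmem : (q.1, q.2+1) ∈ X
    · simp only [hmem, if_true, Dv2]
      try ring_nf
    · simp [hmem]
  have hQ2 : 2*A + 2*B ≤ Q2 := by
    rw [t1, t2, t3, t4] at hfour
    linarith
  have hprod : ∑ a ∈ X ×ˢ X, (ψ a.1 - ψ a.2)^2 = ∑ p ∈ X, ∑ q ∈ X, (ψ p - ψ q)^2 := by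
    rw [Finset.sum_product]
  have hcomb : (∑ a ∈ X ×ˢ X, ∑ e ∈ Gv1 a.1 a.2, Dv2 ψ e)
      + (∑ a ∈ X ×ˢ X, ∑ e ∈ Gv2 a.1 a.2, Dv2 ψ e)
      + (∑ a ∈ X ×ˢ X, ∑ e ∈ Gh a.1 a.2, Dh2 ψ e) ≤ M*N*(2*A + 2*B) := by
    linarith [hT1, hT2, hT3]
  have hMN0 : (0:ℝ) ≤ M*N := mul_nonneg hM0 hN0
  calc ∑ p ∈ X, ∑ q ∈ X, (ψ p - ψ q)^2
      = ∑ a ∈ X ×ˢ X, (ψ a.1 - ψ a.2)^2 := hprod.symm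
    _ ≤ L * (M*N*(2*A + 2*B)) := le_trans step1 (mul_le_mul_of_nonneg_left hcomb hL0)
    _ ≤ L * (M*N*Q2) := by
        refine mul_le_mul_of_nonneg_left ?_ hL0
        exact mul_le_mul_of_nonneg_left hQ2 hMN0
    _ = L * M * N * Q2 := by ring
private lemma member_bound (hn : 1 ≤ n) (hf1 : ∀ i, 1 ≤ f i)
    (hmono : ∀ i j, 1 ≤ i → i ≤ j → j ≤ n → f i ≤ f j)
    (hX : X = (Finset.Icc 1 n ×ˢ Finset.Icc 1 (f n)).filter fun p => p.2 ≤ f p.1)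
    (φ : ℕ × ℕ → ℂ)
    (hden : (∑ p ∈ X, ‖φ p - (∑ q ∈ X, φ q) / (X.card : ℂ)‖ ^ 2) ≠ 0) :
    (1 : ℝ) / (((n + f n - 2 : ℕ) : ℝ) * max (n : ℝ) ((f n : ℕ) : ℝ)) ≤
      ((1 / 2) * ∑ p ∈ X, ∑ q ∈ X,
          if (p.1 - q.1) + (q.1 - p.1) + (p.2 - q.2) + (q.2 - p.2) = 1
          then ‖φ p - φ q‖ ^ 2 else 0) /
        (∑ p ∈ X, ‖φ p - (∑ q ∈ X, φ q) / (X.card : ℂ)‖ ^ 2) := by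
  classical
  have hX11 : (1,1) ∈ X := (memX hn hmono hX).mpr ⟨le_rfl, hn, le_rfl, hf1 1⟩
  have hNpos : 0 < X.card := Finset.card_pos.mpr ⟨(1,1), hX11⟩
  have hNne : ((X.card:ℕ):ℝ) ≠ 0 := by positivity
  set ψ1 : ℕ×ℕ → ℝ := fun p => (φ p).re with hψ1
  set ψ2 : ℕ×ℕ → ℝ := fun p => (φ p).im with hψ2
  have hnormsq : ∀ z : ℂ, ‖z‖^2 = z.re^2 + z.im^2 := fun z => by
    rw [Complex.sq_norm, Complex.normSq_apply]; ring
  have hcastN : ((X.card:ℕ):ℂ) = (((X.card:ℕ):ℝ):ℂ) := by push_cast; rfl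
  have hmre : ((∑ q ∈ X, φ q) / (X.card:ℂ)).re = (∑ q ∈ X, ψ1 q)/((X.card:ℕ):ℝ) := by
    rw [hcastN, Complex.div_ofReal_re, Complex.re_sum]
  have hmim : ((∑ q ∈ X, φ q) / (X.card:ℂ)).im = (∑ q ∈ X, ψ2 q)/((X.card:ℕ):ℝ) := by
    rw [hcastN, Complex.div_ofReal_im, Complex.im_sum]
  have hden_split : (∑ p ∈ X, ‖φ p - (∑ q ∈ X, φ q) / (X.card:ℂ)‖ ^ 2)
      = (∑ p ∈ X, (ψ1 p - (∑ q ∈ X, ψ1 q)/((X.card:ℕ):ℝ))^2)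
        + (∑ p ∈ X, (ψ2 p - (∑ q ∈ X, ψ2 q)/((X.card:ℕ):ℝ))^2) := by
    rw [← Finset.sum_add_distrib]
    refine Finset.sum_congr rfl fun p _ => ?_
    rw [hnormsq, Complex.sub_re, Complex.sub_im, hmre, hmim]
  have hnum_split : (∑ p ∈ X, ∑ q ∈ X,
        if (p.1 - q.1) + (q.1 - p.1) + (p.2 - q.2) + (q.2 - p.2) = 1
        then ‖φ p - φ q‖ ^ 2 else 0)
      = (∑ p ∈ X, ∑ q ∈ X,
          (if (p.1 - q.1) + (q.1 - p.1) + (p.2 - q.2) + (q.2 - p.2) = 1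
           then (ψ1 p - ψ1 q)^2 else 0))
        + (∑ p ∈ X, ∑ q ∈ X,
          (if (p.1 - q.1) + (q.1 - p.1) + (p.2 - q.2) + (q.2 - p.2) = 1
           then (ψ2 p - ψ2 q)^2 else 0)) := by
    rw [← Finset.sum_add_distrib]
    refine Finset.sum_congr rfl fun p _ => ?_
    rw [← Finset.sum_add_distrib]
    refine Finset.sum_congr rfl fun q _ => ?_
    by_cases hc : (p.1 - q.1) + (q.1 - p.1) + (p.2 - q.2) + (q.2 - p.2) = 1
    · simp only [hc, if_true]
      rw [hnormsq, Complex.sub_re, Complex.sub_im]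
    · simp [hc]
  have id1 := pair_identity X ψ1 hNne
  have id2 := pair_identity X ψ2 hNne
  have c1 := core hn hf1 hmono hX ψ1
  have c2 := core hn hf1 hmono hX ψ2
  set L : ℝ := ((n + f n - 2 : ℕ):ℝ) with hL
  set Mn : ℝ := ((max n (f n) : ℕ):ℝ) with hMn
  set N : ℝ := ((X.card:ℕ):ℝ) with hN
  set den : ℝ := ∑ p ∈ X, ‖φ p - (∑ q ∈ X, φ q) / (X.card:ℂ)‖ ^ 2 with hdendef
  set Q1 : ℝ := ∑ p ∈ X, ∑ q ∈ X,
      (if (p.1 - q.1) + (q.1 - p.1) + (p.2 - q.2) + (q.2 - p.2) = 1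
       then (ψ1 p - ψ1 q)^2 else 0) with hQ1
  set Q2 : ℝ := ∑ p ∈ X, ∑ q ∈ X,
      (if (p.1 - q.1) + (q.1 - p.1) + (p.2 - q.2) + (q.2 - p.2) = 1
       then (ψ2 p - ψ2 q)^2 else 0) with hQ2
  have hNpos' : (0:ℝ) < N := by positivity
  have key : den ≤ L * Mn * ((1/2) * (Q1 + Q2)) := by
    have hring : (2*N)*(L*Mn*((1/2)*(Q1+Q2))) = L*Mn*N*Q1 + L*Mn*N*Q2 := by ring
    have h1 : (2*N)*den ≤ (2*N)*(L*Mn*((1/2)*(Q1+Q2))) := by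
      rw [hden_split]
      rw [hring]
      have e1 : (2*N)*((∑ p ∈ X, (ψ1 p - (∑ q ∈ X, ψ1 q)/N)^2)
          + (∑ p ∈ X, (ψ2 p - (∑ q ∈ X, ψ2 q)/N)^2))
          = 2*N*(∑ p ∈ X, (ψ1 p - (∑ q ∈ X, ψ1 q)/N)^2)
            + 2*N*(∑ p ∈ X, (ψ2 p - (∑ q ∈ X, ψ2 q)/N)^2) := by ring
      rw [e1, ← id1, ← id2]
      linarith [c1, c2]
    exact le_of_mul_le_mul_left h1 (by positivity)
  have hden_nonneg : (0:ℝ) ≤ den := by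
    rw [hdendef]; exact Finset.sum_nonneg fun p _ => by positivity
  have hden_pos : (0:ℝ) < den := lt_of_le_of_ne hden_nonneg (Ne.symm hden)
  have hnum_nonneg : (0:ℝ) ≤ (1/2) * (Q1 + Q2) := by
    have q1 : (0:ℝ) ≤ Q1 := Finset.sum_nonneg fun p _ => Finset.sum_nonneg fun q _ => by
      split_ifs; exacts [sq_nonneg _, le_rfl]
    have q2 : (0:ℝ) ≤ Q2 := Finset.sum_nonneg fun p _ => Finset.sum_nonneg fun q _ => by
      split_ifs; exacts [sq_nonneg _, le_rfl]
    linarith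
  have hMcast : Mn = max (n:ℝ) ((f n:ℕ):ℝ) := by rw [hMn]; push_cast; rfl
  rw [hnum_split]
  by_cases hLM0 : L * max (n:ℝ) ((f n:ℕ):ℝ) = 0
  · rw [hLM0, div_zero]
    exact div_nonneg hnum_nonneg hden_nonneg
  · have hLM0' : (0:ℝ) < L * max (n:ℝ) ((f n:ℕ):ℝ) := by
      rcases lt_or_eq_of_le (mul_nonneg (by positivity : (0:ℝ) ≤ L)
        (le_trans (by positivity : (0:ℝ) ≤ (n:ℝ)) (le_max_left _ _))) with h | h
      · exact h
      · exact absurd h.symm hLM0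
    rw [div_le_div_iff₀ hLM0' hden_pos, one_mul]
    calc den ≤ L * Mn * ((1/2) * (Q1 + Q2)) := key
      _ = (1/2) * (Q1 + Q2) * (L * max (n:ℝ) ((f n:ℕ):ℝ)) := by rw [hMcast]; ring

end staircase

/-- Poincaré-type lower bound for the staircase region
`X = {(i,j) : 1 ≤ i ≤ n, 1 ≤ j ≤ f(i)} ⊂ ℤ²` with `f` non-decreasing: the first non-zero
eigenvalue of the discrete Neumann Laplacian (characterized as the infimum of the Rayleigh
quotient `Q(φ)/‖φ − mean‖²` over non-constant `φ`) satisfies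
`μ₁ ≥ 1/((n + f(n) − 2)·max(n, f(n)))`. -/
theorem staircase_first_eigenvalue_lower_bound
    (n : ℕ) (hn : 1 ≤ n) (f : ℕ → ℕ) (hf1 : ∀ i, 1 ≤ f i)
    (hmono : ∀ i j, 1 ≤ i → i ≤ j → j ≤ n → f i ≤ f j)
    (X : Finset (ℕ × ℕ))
    (hX : X = (Finset.Icc 1 n ×ˢ Finset.Icc 1 (f n)).filter fun p => p.2 ≤ f p.1) :
    (1 : ℝ) / (((n + f n - 2 : ℕ) : ℝ) * max (n : ℝ) ((f n : ℕ) : ℝ)) ≤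
      sInf { r : ℝ | ∃ φ : ℕ × ℕ → ℂ,
        (∑ p ∈ X, ‖φ p - (∑ q ∈ X, φ q) / (X.card : ℂ)‖ ^ 2) ≠ 0 ∧
        r = ((1 / 2) * ∑ p ∈ X, ∑ q ∈ X,
              if (p.1 - q.1) + (q.1 - p.1) + (p.2 - q.2) + (q.2 - p.2) = 1
              then ‖φ p - φ q‖ ^ 2 else 0) /
            (∑ p ∈ X, ‖φ p - (∑ q ∈ X, φ q) / (X.card : ℂ)‖ ^ 2) } := by
  classical
  by_cases hcase : n + f n - 2 = 0
  · rw [show ((n + f n - 2 : ℕ):ℝ) = 0 by rw [hcase]; simp, zero_mul, div_zero]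
    apply Real.sInf_nonneg
    rintro r ⟨φ, hden, rfl⟩
    apply div_nonneg
    · apply mul_nonneg (by norm_num)
      refine Finset.sum_nonneg fun p _ => Finset.sum_nonneg fun q _ => ?_
      split_ifs
      exacts [sq_nonneg _, le_rfl]
    · exact Finset.sum_nonneg fun p _ => by positivity
  · refine le_csInf ?_ ?_
    · -- nonempty: indicator of (1,1)
      have hX11 : (1,1) ∈ X := (memX hn hmono hX).mpr ⟨le_rfl, hn, le_rfl, hf1 1⟩
      have hXnf : (n, f n) ∈ X := (memX hn hmono hX).mpr ⟨hn, le_rfl, hf1 n, le_rfl⟩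
      have hne : ((n : ℕ), f n) ≠ ((1 : ℕ), (1 : ℕ)) := by
        intro h
        have h1 := congrArg Prod.fst h
        have h2 := congrArg Prod.snd h
        simp only at h1 h2
        omega
      set φ : ℕ×ℕ → ℂ := fun p => if p = (1,1) then 1 else 0 with hφ
      have hdenne : (∑ p ∈ X, ‖φ p - (∑ q ∈ X, φ q) / (X.card : ℂ)‖ ^ 2) ≠ 0 := by
        intro h0
        have hall : ∀ p ∈ X, ‖φ p - (∑ q ∈ X, φ q) / (X.card : ℂ)‖ ^ 2 = 0 := by
          intro p hp
          have := (Finset.sum_eq_zero_iff_of_nonneg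
            (fun p _ => by positivity)).mp h0
          exact this p hp
        have h1 : φ (1,1) = (∑ q ∈ X, φ q) / (X.card : ℂ) := by
          have := hall (1,1) hX11
          rw [pow_eq_zero_iff (by norm_num), norm_eq_zero, sub_eq_zero] at this
          exact this
        have h2 : φ (n, f n) = (∑ q ∈ X, φ q) / (X.card : ℂ) := by
          have := hall (n, f n) hXnf
          rw [pow_eq_zero_iff (by norm_num), norm_eq_zero, sub_eq_zero] at this
          exact this
        have : φ (1,1) = φ (n, f n) := h1.trans h2.symm
        rw [hφ] at this
        simp only [if_pos rfl, if_neg hne] at this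
        exact one_ne_zero this
      exact ⟨_, ⟨φ, hdenne, rfl⟩⟩
    · rintro r ⟨φ, hden, rfl⟩
      exact member_bound hn hf1 hmono hX φ hden
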